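/- Let H be a real separable Hilbert space with inner product ⟨·,·⟩ and norm ‖·‖, and let (e_k)_{k≥1} be a Hilbert basis (complete orthonormal sequence) of H. Let μ be a Borel probability measure on H such that σ² := ∫_H ‖u‖² dμ(u) satisfies 0 < σ² < ∞. Let ε > 0, let p ∈ ℕ with p ≥ 1, and let φ̃_1, …, φ̃_p ∈ H satisfy ‖ φ̃_k − e_k ‖ ≤ ε / (σ √p) for each k = 1, …, p. Then the squared statistical encoding error satisfies ∫_H ‖ u − Σ_{k=1}^{p} ⟨φ̃_k, u⟩ e_k ‖² dμ(u) ≤ ε² + Σ_{k=p+1}^{∞} ∫_H | ⟨e_k, u⟩ |² dμ(u). -/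

import Mathlib

open MeasureTheory
open scoped RealInnerProductSpace

/-- If each encoder basis function `φ k` approximates the Hilbert basis vector `e k` to
accuracy `ε / (σ √p)`, where `σ² = ∫ ‖u‖² dμ`, then the squared statistical encoding error
is at most `ε²` plus the encoder-independent lower bound `∑_{k>p} ∫ ⟪e k, u⟫² dμ`. -/
theorem statistical_encoding_error_bound_of_basis_approx
    {H : Type*} [NormedAddCommGroup H] [InnerProductSpace ℝ H] [CompleteSpace H]
    [MeasurableSpace H] [BorelSpace H]
    (e : HilbertBasis ℕ ℝ H)
    (μ : Measure H) [IsProbabilityMeasure μ]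
    (hμ : Integrable (fun u => ‖u‖ ^ 2) μ)
    (hμpos : 0 < ∫ u, ‖u‖ ^ 2 ∂μ)
    (ε : ℝ) (hε : 0 < ε)
    (p : ℕ) (hp : 1 ≤ p) (φ : Fin p → H)
    (hφ : ∀ k : Fin p,
      ‖φ k - e (k : ℕ)‖ ≤ ε / (Real.sqrt (∫ u, ‖u‖ ^ 2 ∂μ) * Real.sqrt p)) :
    (∫ u, ‖u - ∑ k : Fin p, ⟪φ k, u⟫ • e (k : ℕ)‖ ^ 2 ∂μ) ≤
      ε ^ 2 + ∑' k : {k : ℕ // p ≤ k}, ∫ u, ⟪e (k : ℕ), u⟫ ^ 2 ∂μ := by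
  set σ2 : ℝ := ∫ u, ‖u‖ ^ 2 ∂μ with hσ2
  -- measurability and integrability of inner-product squares
  have hmeas : ∀ w : H, AEStronglyMeasurable (fun u => ⟪w, u⟫ ^ 2) μ := fun w =>
    ((innerSL ℝ w).continuous.pow 2).aestronglyMeasurable
  have hint : ∀ w : H, Integrable (fun u => ⟪w, u⟫ ^ 2) μ := by
    intro w
    refine (hμ.const_mul (‖w‖ ^ 2)).mono' (hmeas w) ?_
    filter_upwards with u
    rw [Real.norm_eq_abs, abs_of_nonneg (sq_nonneg _)]
    calc ⟪w, u⟫ ^ 2 = |⟪w, u⟫| ^ 2 := (sq_abs _).symm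
      _ ≤ (‖w‖ * ‖u‖) ^ 2 := by
          exact pow_le_pow_left₀ (abs_nonneg _) (abs_real_inner_le_norm w u) 2
      _ = ‖w‖ ^ 2 * ‖u‖ ^ 2 := mul_pow _ _ 2
  -- pointwise expansion
  have hpt : ∀ u : H, ‖u - ∑ k : Fin p, ⟪φ k, u⟫ • e (k : ℕ)‖ ^ 2
      = (∑ k : Fin p, ⟪e (k : ℕ) - φ k, u⟫ ^ 2)
        + (‖u‖ ^ 2 - ∑ k : Fin p, ⟪e (k : ℕ), u⟫ ^ 2) := by
    intro u
    have hon : Orthonormal ℝ (fun k : Fin p => e (k : ℕ)) :=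
      e.orthonormal.comp _ Fin.val_injective
    have hss : ⟪(∑ k : Fin p, ⟪φ k, u⟫ • e (k : ℕ)), (∑ k : Fin p, ⟪φ k, u⟫ • e (k : ℕ))⟫
        = ∑ k : Fin p, ⟪φ k, u⟫ * ⟪φ k, u⟫ := by
      simpa using hon.inner_sum (fun k => ⟪φ k, u⟫) (fun k => ⟪φ k, u⟫) Finset.univ
    have hus : ⟪u, (∑ k : Fin p, ⟪φ k, u⟫ • e (k : ℕ))⟫
        = ∑ k : Fin p, ⟪φ k, u⟫ * ⟪e (k : ℕ), u⟫ := by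
      rw [inner_sum]
      refine Finset.sum_congr rfl fun k _ => ?_
      rw [real_inner_smul_right, real_inner_comm u (e (k : ℕ))]
    have hss' : ‖∑ k : Fin p, ⟪φ k, u⟫ • e (k : ℕ)‖ ^ 2
        = ∑ k : Fin p, ⟪φ k, u⟫ * ⟪φ k, u⟫ := by
      rw [← real_inner_self_eq_norm_sq]; exact hss
    rw [norm_sub_sq_real, hss', hus]
    simp only [inner_sub_left, sub_sq]
    rw [Finset.sum_add_distrib, Finset.sum_sub_distrib]
    simp only [mul_assoc, ← Finset.mul_sum]
    have : ∑ k : Fin p, ⟪e (k : ℕ), u⟫ * ⟪φ k, u⟫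
        = ∑ k : Fin p, ⟪φ k, u⟫ * ⟪e (k : ℕ), u⟫ :=
      Finset.sum_congr rfl fun k _ => mul_comm _ _
    rw [this]
    simp only [← sq]
    ring
  -- integrability of the finite sums
  have hint1 : Integrable (fun u => ∑ k : Fin p, ⟪e (k : ℕ) - φ k, u⟫ ^ 2) μ :=
    integrable_finset_sum _ fun k _ => hint _
  have hint2 : Integrable (fun u => ∑ k : Fin p, ⟪e (k : ℕ), u⟫ ^ 2) μ :=
    integrable_finset_sum _ fun k _ => hint _
  have hsplit : (∫ u, ‖u - ∑ k : Fin p, ⟪φ k, u⟫ • e (k : ℕ)‖ ^ 2 ∂μ)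
      = (∫ u, ∑ k : Fin p, ⟪e (k : ℕ) - φ k, u⟫ ^ 2 ∂μ)
        + (σ2 - ∫ u, ∑ k : Fin p, ⟪e (k : ℕ), u⟫ ^ 2 ∂μ) := by
    rw [show (fun u => ‖u - ∑ k : Fin p, ⟪φ k, u⟫ • e (k : ℕ)‖ ^ 2)
        = fun u => (∑ k : Fin p, ⟪e (k : ℕ) - φ k, u⟫ ^ 2)
          + (‖u‖ ^ 2 - ∑ k : Fin p, ⟪e (k : ℕ), u⟫ ^ 2) from funext hpt]
    have hg : Integrable (fun u => ‖u‖ ^ 2 - ∑ k : Fin p, ⟪e (k : ℕ), u⟫ ^ 2) μ :=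
      hμ.sub hint2
    rw [integral_add hint1 hg, integral_sub hμ hint2]
  -- bound the first term by ε²
  have hfirst : (∫ u, ∑ k : Fin p, ⟪e (k : ℕ) - φ k, u⟫ ^ 2 ∂μ) ≤ ε ^ 2 := by
    rw [integral_finset_sum _ fun k _ => hint _]
    have hσpos : (0:ℝ) < σ2 := hμpos
    have hppos : (0:ℝ) < (p : ℝ) := by exact_mod_cast hp
    have hbk : ∀ k : Fin p, (∫ u, ⟪e (k : ℕ) - φ k, u⟫ ^ 2 ∂μ) ≤ ε ^ 2 / p := by
      intro k
      have hw : ‖e (k : ℕ) - φ k‖ ≤ ε / (Real.sqrt σ2 * Real.sqrt p) := by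
        rw [norm_sub_rev]; exact hφ k
      have h1 : (∫ u, ⟪e (k : ℕ) - φ k, u⟫ ^ 2 ∂μ)
          ≤ ∫ u, ‖e (k : ℕ) - φ k‖ ^ 2 * ‖u‖ ^ 2 ∂μ := by
        refine integral_mono (hint _) (hμ.const_mul _) fun u => ?_
        calc ⟪e (k : ℕ) - φ k, u⟫ ^ 2 = |⟪e (k : ℕ) - φ k, u⟫| ^ 2 := (sq_abs _).symm
          _ ≤ (‖e (k : ℕ) - φ k‖ * ‖u‖) ^ 2 :=
              pow_le_pow_left₀ (abs_nonneg _) (abs_real_inner_le_norm _ u) 2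
          _ = ‖e (k : ℕ) - φ k‖ ^ 2 * ‖u‖ ^ 2 := mul_pow _ _ 2
      have h2 : (∫ u, ‖e (k : ℕ) - φ k‖ ^ 2 * ‖u‖ ^ 2 ∂μ)
          = ‖e (k : ℕ) - φ k‖ ^ 2 * σ2 := by
        rw [integral_const_mul]
      have h3 : ‖e (k : ℕ) - φ k‖ ^ 2 ≤ (ε / (Real.sqrt σ2 * Real.sqrt p)) ^ 2 :=
        pow_le_pow_left₀ (norm_nonneg _) hw 2
      have h4 : (ε / (Real.sqrt σ2 * Real.sqrt p)) ^ 2 = ε ^ 2 / (σ2 * p) := by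
        rw [div_pow, mul_pow, Real.sq_sqrt hσpos.le, Real.sq_sqrt hppos.le]
      calc (∫ u, ⟪e (k : ℕ) - φ k, u⟫ ^ 2 ∂μ) ≤ ‖e (k : ℕ) - φ k‖ ^ 2 * σ2 :=
            h1.trans_eq h2
        _ ≤ ε ^ 2 / (σ2 * p) * σ2 := by
            rw [← h4]; exact mul_le_mul_of_nonneg_right h3 hσpos.le
        _ = ε ^ 2 / p := by field_simp
    calc (∑ k : Fin p, ∫ u, ⟪e (k : ℕ) - φ k, u⟫ ^ 2 ∂μ)
        ≤ ∑ k : Fin p, ε ^ 2 / p := Finset.sum_le_sum fun k _ => hbk k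
      _ = ε ^ 2 := by
          rw [Finset.sum_const, Finset.card_univ, Fintype.card_fin, nsmul_eq_mul]
          field_simp
  -- Parseval and interchange of sum and integral
  set F : ℕ → ℝ := fun k => ∫ u, ⟪e k, u⟫ ^ 2 ∂μ with hF
  set G : ℕ → H → ENNReal := fun k u => ENNReal.ofReal (⟪e k, u⟫ ^ 2) with hG
  have hGmeas : ∀ k, Measurable (G k) := fun k =>
    ENNReal.measurable_ofReal.comp ((innerSL ℝ (e k)).continuous.pow 2).measurable
  have hpar : ∀ u : H, HasSum (fun k => ⟪e k, u⟫ ^ 2) (‖u‖ ^ 2) := by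
    intro u
    have h := e.hasSum_inner_mul_inner u u
    have h2 : (fun i => ⟪u, e i⟫ * ⟪e i, u⟫) = fun i => ⟪e i, u⟫ ^ 2 := by
      funext i; rw [real_inner_comm]; ring
    rw [h2, real_inner_self_eq_norm_sq] at h
    exact h
  have hGsum : ∀ u : H, ∑' k, G k u = ENNReal.ofReal (‖u‖ ^ 2) := by
    intro u
    rw [← (hpar u).tsum_eq,
      ENNReal.ofReal_tsum_of_nonneg (fun k => sq_nonneg _) (hpar u).summable]
  have hlint : ∑' k, ∫⁻ u, G k u ∂μ = ∫⁻ u, ENNReal.ofReal (‖u‖ ^ 2) ∂μ := by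
    rw [← lintegral_tsum fun k => (hGmeas k).aemeasurable]
    exact lintegral_congr fun u => hGsum u
  have htop : ∫⁻ u, ENNReal.ofReal (‖u‖ ^ 2) ∂μ < ⊤ := hμ.lintegral_lt_top
  have hfin : ∀ k, ∫⁻ u, G k u ∂μ ≠ ⊤ := by
    intro k
    exact ne_of_lt (lt_of_le_of_lt (le_trans (ENNReal.le_tsum k) hlint.le) htop)
  have hF_eq : ∀ k, F k = (∫⁻ u, G k u ∂μ).toReal := by
    intro k
    exact integral_eq_lintegral_of_nonneg_ae
      (Filter.Eventually.of_forall fun u => sq_nonneg _) (hmeas (e k))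
  have hσ2_eq : σ2 = (∫⁻ u, ENNReal.ofReal (‖u‖ ^ 2) ∂μ).toReal :=
    integral_eq_lintegral_of_nonneg_ae
      (Filter.Eventually.of_forall fun u => sq_nonneg _)
      (continuous_norm.pow 2).aestronglyMeasurable
  have htsumF : ∑' k, F k = σ2 := by
    calc ∑' k, F k = ∑' k, (∫⁻ u, G k u ∂μ).toReal := tsum_congr fun k => hF_eq k
      _ = (∑' k, ∫⁻ u, G k u ∂μ).toReal := (ENNReal.tsum_toReal_eq hfin).symm
      _ = (∫⁻ u, ENNReal.ofReal (‖u‖ ^ 2) ∂μ).toReal := by rw [hlint]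
      _ = σ2 := hσ2_eq.symm
  have hFsummable : Summable F := by
    have h := ENNReal.summable_toReal (by rw [hlint]; exact htop.ne :
      ∑' k, ∫⁻ u, G k u ∂μ ≠ ⊤)
    exact h.congr fun k => (hF_eq k).symm
  -- split the sum into head and tail
  have htail : ∑ k ∈ Finset.range p, F k + ∑' k : {k : ℕ // p ≤ k}, F (k : ℕ) = σ2 := by
    have h1 := hFsummable.sum_add_tsum_subtype_compl (Finset.range p)
    have h2 : ∑' (x : {x : ℕ // x ∉ Finset.range p}), F (x : ℕ)
        = ∑' k : {k : ℕ // p ≤ k}, F (k : ℕ) := by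
      exact ((Equiv.subtypeEquivRight (fun k => by
        simp [Finset.mem_range, not_lt])).tsum_eq (fun x : {x : ℕ // x ∉ Finset.range p} => F (x : ℕ))).symm
    rw [h2] at h1
    rw [h1, htsumF]
  have hhead : (∫ u, ∑ k : Fin p, ⟪e (k : ℕ), u⟫ ^ 2 ∂μ) = ∑ k ∈ Finset.range p, F k := by
    rw [integral_finset_sum _ fun k _ => hint _]
    exact Fin.sum_univ_eq_sum_range (fun k => F k) p
  have htail' : σ2 - (∫ u, ∑ k : Fin p, ⟪e (k : ℕ), u⟫ ^ 2 ∂μ)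
      = ∑' k : {k : ℕ // p ≤ k}, ∫ u, ⟪e (k : ℕ), u⟫ ^ 2 ∂μ := by
    rw [hhead]
    linarith [htail]
  rw [hsplit, ← htail']
  exact add_le_add_left hfirst _
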